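/- arXiv:1809.01777 — 7 statements merged into one kernel-verified Lean document; each statement's English description precedes it below -/
import Mathlib

section
/- Let G be a group and let H, G₁, G₂ be subgroups of G such that G₁ and G₂ are contained in the normalizer of H. If the pointwise product set G₁·G₂ meets H only in the identity element and G₁ ⊓ G₂ is trivial, then the subgroup joins satisfy (H ⊔ G₁) ⊓ (H ⊔ G₂) = H. -/
open scoped Pointwise

open Set in
lemma coe_sup_of_le_normalizer {G : Type*} [Group G] (H K : Subgroup G)
    (hK : K ≤ Subgroup.normalizer (H : Set G)) : (↑(H ⊔ K) : Set G) = (H : Set G) * (K : Set G) := by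
  rw [Subgroup.sup_eq_closure_mul]
  refine Set.Subset.antisymm (fun x hx => ?_) Subgroup.subset_closure
  induction hx using Subgroup.closure_induction'' with
  | one => exact ⟨1, one_mem _, 1, one_mem _, mul_one 1⟩
  | mem _ hx => exact hx
  | inv_mem x hx =>
    obtain ⟨h, hh, g, hg, rfl⟩ := hx
    refine ⟨g⁻¹ * h⁻¹ * g, ?_, g⁻¹, inv_mem hg, by group⟩
    have := (Subgroup.mem_normalizer_iff.mp (hK (inv_mem hg)) h⁻¹).mp (inv_mem hh)
    simpa [mul_assoc] using this
  | mul x x' _ _ hx hx' =>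
    obtain ⟨h, hh, g, hg, rfl⟩ := hx
    obtain ⟨h', hh', g', hg', rfl⟩ := hx'
    refine ⟨h * (g * h' * g⁻¹), mul_mem hh ?_, g * g', mul_mem hg hg', by group⟩
    exact (Subgroup.mem_normalizer_iff.mp (hK hg) h').mp hh'

/-- If `G₁, G₂` normalize `H`, the product set `G₁ * G₂` meets `H` only in the identity,
and `G₁ ⊓ G₂` is trivial, then `(H ⊔ G₁) ⊓ (H ⊔ G₂) = H` as subgroups. -/
theorem stmt_1 {G : Type*} [Group G] (H G₁ G₂ : Subgroup G)
    (hn1 : G₁ ≤ Subgroup.normalizer (H : Set G)) (hn2 : G₂ ≤ Subgroup.normalizer (H : Set G))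
    (h1 : ((G₁ : Set G) * (G₂ : Set G)) ∩ (H : Set G) = {1})
    (h2 : G₁ ⊓ G₂ = ⊥) :
    (H ⊔ G₁) ⊓ (H ⊔ G₂) = H := by
  refine le_antisymm (fun x hx => ?_) (le_inf le_sup_left le_sup_left)
  obtain ⟨hx1, hx2⟩ := Subgroup.mem_inf.mp hx
  have hx1' : x ∈ (H : Set G) * (G₁ : Set G) := by
    rw [← coe_sup_of_le_normalizer H G₁ hn1]; exact hx1
  have hx2' : x ∈ (H : Set G) * (G₂ : Set G) := by
    rw [← coe_sup_of_le_normalizer H G₂ hn2]; exact hx2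
  obtain ⟨h, hh, g, hg, rfl⟩ := hx1'
  obtain ⟨h', hh', g', hg', heq⟩ := hx2'
  -- g * g'⁻¹ = h⁻¹ * h' ∈ (G₁ * G₂) ∩ H
  have hmem : g * g'⁻¹ ∈ ((G₁ : Set G) * (G₂ : Set G)) ∩ (H : Set G) := by
    constructor
    · exact ⟨g, hg, g'⁻¹, inv_mem hg', rfl⟩
    · have h3 : h' * g' = h * g := heq
      have : g * g'⁻¹ = h⁻¹ * h' := by
        calc g * g'⁻¹ = h⁻¹ * (h * g) * g'⁻¹ := by group
          _ = h⁻¹ * (h' * g') * g'⁻¹ := by rw [h3]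
          _ = h⁻¹ * h' := by group
      rw [this]
      exact mul_mem (inv_mem hh) hh'
  rw [h1] at hmem
  have hgg : g = g' := by
    have : g * g'⁻¹ = 1 := hmem
    group at this
    exact mul_inv_eq_one.mp hmem
  subst hgg
  have : g ∈ G₁ ⊓ G₂ := ⟨hg, hg'⟩
  rw [h2] at this
  simp only [Subgroup.mem_bot] at this
  subst this
  simpa using hh
end

section
/- Let G be a group acting on a type X, let H, G₁, G₂ be finite subgroups of G with H ≤ G₁, H ≤ G₂, H normal in G₁ and H normal in G₂, and let P₁, P₂ ∈ X. Let π : X → X/H be the canonical map onto the quotient of X by the orbit equivalence relation of the H-action. Then the identity ∑_{h ∈ H} single(h • P₁) + ∑_{σ ∈ G₁} single(σ • P₂) = ∑_{h ∈ H} single(h • P₂) + ∑_{τ ∈ G₂} single(τ • P₁) holds in the free abelian group on X if and only if the identity single(π(P₁)) + ∑_{c ∈ G₁/H} single(π(ĉ • P₂)) = single(π(P₂)) + ∑_{c ∈ G₂/H} single(π(ĉ • P₁)) holds in the free abelian group on X/H, where ĉ denotes a representative in Gᵢ of the coset c (the summands being independent of this choice). -/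
open scoped Classical

section Stmt7Aux

variable {G X : Type*} [Group G] [MulAction G X]

private lemma mk_elt_eq {H K : Subgroup G} (hHK : H ≤ K) [hn : (H.subgroupOf K).Normal]
    (c : K ⧸ H.subgroupOf K) (h : H) :
    (QuotientGroup.mk (⟨(h : G) * ((c.out : K) : G),
        K.mul_mem (hHK h.2) c.out.2⟩ : K) : K ⧸ H.subgroupOf K) = c := by
  have ha : (⟨(h : G) * ((c.out : K) : G), K.mul_mem (hHK h.2) c.out.2⟩ : K)
      = (⟨(h : G), hHK h.2⟩ : K) * c.out := by ext; rfl
  conv_rhs => rw [← Quotient.out_eq c]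
  show _ = QuotientGroup.mk c.out
  rw [ha, QuotientGroup.eq]
  have hmem : (⟨(h : G), hHK h.2⟩ : K)⁻¹ ∈ H.subgroupOf K := by
    apply Subgroup.inv_mem
    simpa [Subgroup.mem_subgroupOf] using h.2
  have := hn.conj_mem _ hmem (c.out)⁻¹
  have heq : ((⟨(h : G), hHK h.2⟩ : K) * c.out)⁻¹ * c.out
      = (c.out)⁻¹ * (⟨(h : G), hHK h.2⟩ : K)⁻¹ * ((c.out)⁻¹)⁻¹ := by group
  rw [heq]; exact this

private lemma sum_coset_decomp (H K : Subgroup G) [Fintype H] [Fintype K]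
    (hHK : H ≤ K) [hn : (H.subgroupOf K).Normal] (P : X) :
    ∑ σ : K, Finsupp.single ((σ : G) • P) (1 : ℤ)
      = ∑ c : K ⧸ H.subgroupOf K, ∑ h : H,
          Finsupp.single ((h : G) • ((c.out : G) • P)) (1 : ℤ) := by
  rw [show (∑ c : K ⧸ H.subgroupOf K, ∑ h : H,
          Finsupp.single ((h : G) • ((c.out : G) • P)) (1 : ℤ))
      = ∑ p : (K ⧸ H.subgroupOf K) × H,
          Finsupp.single ((p.2 : G) • ((p.1.out : G) • P)) (1 : ℤ) from
    (Fintype.sum_prod_type (f := fun p : (K ⧸ H.subgroupOf K) × H =>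
      Finsupp.single ((p.2 : G) • ((p.1.out : G) • P)) (1 : ℤ))).symm]
  have key : Function.Bijective
      (fun p : (K ⧸ H.subgroupOf K) × H =>
        (⟨(p.2 : G) * ((p.1.out : K) : G), K.mul_mem (hHK p.2.2) p.1.out.2⟩ : K)) := by
    constructor
    · rintro ⟨c₁, h₁⟩ ⟨c₂, h₂⟩ heq
      dsimp only at heq
      have hc : c₁ = c₂ := by
        rw [← mk_elt_eq hHK c₁ h₁, ← mk_elt_eq hHK c₂ h₂, heq]
      subst hc
      have : (h₁ : G) * ((c₁.out : K) : G) = (h₂ : G) * ((c₁.out : K) : G) :=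
        congrArg Subtype.val heq
      have : (h₁ : G) = (h₂ : G) := mul_right_cancel this
      simp [Prod.ext_iff, Subtype.ext this]
    · intro σ
      set c : K ⧸ H.subgroupOf K := QuotientGroup.mk σ with hc
      have h0 : (c.out)⁻¹ * σ ∈ H.subgroupOf K := by
        rw [← QuotientGroup.eq]
        rw [hc]
        exact Quotient.out_eq _
      have h1 : σ * (c.out)⁻¹ ∈ H.subgroupOf K := by
        have h2 := hn.conj_mem _ h0 σ
        have heq : σ * ((c.out)⁻¹ * σ) * σ⁻¹ = σ * (c.out)⁻¹ := by group
        rwa [heq] at h2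
      have hmemH : (σ : G) * ((c.out : K) : G)⁻¹ ∈ H := by
        simpa [Subgroup.mem_subgroupOf] using h1
      refine ⟨⟨c, ⟨(σ : G) * ((c.out : K) : G)⁻¹, hmemH⟩⟩, ?_⟩
      ext
      simp [mul_assoc]
  refine (Fintype.sum_bijective _ key _ _ ?_).symm
  rintro ⟨c, h⟩
  simp [mul_smul]

private noncomputable def Fdiv (H : Subgroup G) [Fintype H] (Q : X) : X →₀ ℤ :=
  ∑ h : H, Finsupp.single ((h : G) • Q) (1 : ℤ)

private lemma Fdiv_smul (H : Subgroup G) [Fintype H] (h₀ : H) (Q : X) :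
    Fdiv H ((h₀ : G) • Q) = Fdiv H Q := by
  unfold Fdiv
  refine Fintype.sum_equiv (Equiv.mulRight h₀) _ _ ?_
  intro h
  simp [mul_smul]

private lemma Fdiv_sound (H : Subgroup G) [Fintype H] :
    ∀ a b : X, (MulAction.orbitRel H X) a b → Fdiv H a = Fdiv H b := by
  intro a b hab
  rw [MulAction.orbitRel_apply, MulAction.mem_orbit_iff] at hab
  obtain ⟨h, rfl⟩ := hab
  rw [Subgroup.smul_def]
  exact Fdiv_smul H h b

end Stmt7Aux

/-- Divisor identity upstairs iff its pushed-forward identity downstairs: for finite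
subgroups `H ≤ G₁`, `H ≤ G₂` with `H` normal in both, the identity
`∑_{h ∈ H} single (h • P₁) + ∑_{σ ∈ G₁} single (σ • P₂)
  = ∑_{h ∈ H} single (h • P₂) + ∑_{τ ∈ G₂} single (τ • P₁)`
holds on `X` iff
`single (π P₁) + ∑_{c ∈ G₁/H} single (π (ĉ • P₂))
  = single (π P₂) + ∑_{c ∈ G₂/H} single (π (ĉ • P₁))`
holds on `X/H`, where `ĉ` is a coset representative. -/
theorem stmt_7 {G X : Type*} [Group G] [MulAction G X]
    (H G₁ G₂ : Subgroup G) [Fintype H] [Fintype G₁] [Fintype G₂]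
    (h1 : H ≤ G₁) (h2 : H ≤ G₂)
    [(H.subgroupOf G₁).Normal] [(H.subgroupOf G₂).Normal]
    (P₁ P₂ : X) :
    (∑ h : H, Finsupp.single ((h : G) • P₁) (1 : ℤ) +
        ∑ σ : G₁, Finsupp.single ((σ : G) • P₂) (1 : ℤ) =
      ∑ h : H, Finsupp.single ((h : G) • P₂) (1 : ℤ) +
        ∑ τ : G₂, Finsupp.single ((τ : G) • P₁) (1 : ℤ)) ↔
    (Finsupp.single (Quotient.mk (MulAction.orbitRel H X) P₁) (1 : ℤ) +
        ∑ c : G₁ ⧸ H.subgroupOf G₁,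
          Finsupp.single (Quotient.mk (MulAction.orbitRel H X) ((c.out : G) • P₂)) (1 : ℤ) =
      Finsupp.single (Quotient.mk (MulAction.orbitRel H X) P₂) (1 : ℤ) +
        ∑ c : G₂ ⧸ H.subgroupOf G₂,
          Finsupp.single (Quotient.mk (MulAction.orbitRel H X) ((c.out : G) • P₁)) (1 : ℤ)) := by
  set π : X → Quotient (MulAction.orbitRel H X) := Quotient.mk (MulAction.orbitRel H X) with hπ
  have hπeq : ∀ (h : H) (Q : X), π ((h : G) • Q) = π Q := by
    intro h Q
    exact Quotient.sound ⟨h, rfl⟩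
  have push : ∀ Q : X,
      ∑ h : H, Finsupp.single (π ((h : G) • Q)) (1 : ℤ)
        = (Fintype.card H) • Finsupp.single (π Q) (1 : ℤ) := by
    intro Q
    rw [Finset.sum_congr rfl fun h _ => by rw [hπeq h Q]]
    rw [Finset.sum_const, Finset.card_univ]
  rw [sum_coset_decomp H G₁ h1 P₂, sum_coset_decomp H G₂ h2 P₁]
  constructor
  · intro hup
    have h3 := congrArg (Finsupp.mapDomain.addMonoidHom π) hup
    simp only [map_add, map_sum, Finsupp.mapDomain.addMonoidHom_apply,
      Finsupp.mapDomain_single] at h3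
    rw [push P₁, push P₂] at h3
    simp only [fun c : G₁ ⧸ H.subgroupOf G₁ => push ((c.out : G) • P₂)] at h3
    simp only [fun c : G₂ ⧸ H.subgroupOf G₂ => push ((c.out : G) • P₁)] at h3
    rw [← Finset.smul_sum, ← Finset.smul_sum, ← smul_add, ← smul_add] at h3
    have hcard : (Fintype.card H : ℤ) ≠ 0 := by
      exact_mod_cast Fintype.card_ne_zero
    have := smul_right_injective (Quotient (MulAction.orbitRel H X) →₀ ℤ) hcard
    apply this
    simpa [natCast_zsmul] using h3
  · intro hdown
    have h3 := congrArg (Finsupp.linearCombination ℤ (Quotient.lift (Fdiv H) (Fdiv_sound H))) hdown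
    simp only [map_add, map_sum, Finsupp.linearCombination_single, one_smul] at h3
    have hlift : ∀ Q : X, Quotient.lift (Fdiv H) (Fdiv_sound H) (π Q) = Fdiv H Q :=
      fun Q => rfl
    rw [hlift P₁, hlift P₂] at h3
    simp only [hlift] at h3
    simpa only [Fdiv] using h3
end

section
/- Let K be a field of characteristic p > 0 and let q be a power of p. Suppose x, y, z ∈ K satisfy x^q + x = y^{q+1} and y((x^q + x)^{q−1} − 1) = z^{q²−q+1}, and suppose x ≠ 0. Then the triple (x', y', z') = (1/x, −y/x, z/x) also satisfies x'^q + x' = y'^{q+1} and y'((x'^q + x')^{q−1} − 1) = z'^{q²−q+1}. -/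
/-- The map `ξ(x, y, z) = (1/x, -y/x, z/x)` preserves the affine
Giulietti–Korchmáros curve `x^q + x = y^{q+1}`, `y((x^q+x)^{q-1} - 1) = z^{q²-q+1}`. -/
theorem stmt_9 {K : Type*} [Field K] (p n q : ℕ) (hp : p.Prime) [CharP K p]
    (hn : 0 < n) (hq : q = p ^ n) (x y z : K)
    (h1 : x ^ q + x = y ^ (q + 1))
    (h2 : y * ((x ^ q + x) ^ (q - 1) - 1) = z ^ (q ^ 2 - q + 1))
    (hx : x ≠ 0) :
    (1 / x) ^ q + 1 / x = (-y / x) ^ (q + 1) ∧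
      (-y / x) * (((1 / x) ^ q + 1 / x) ^ (q - 1) - 1) = (z / x) ^ (q ^ 2 - q + 1) := by
  haveI : Fact p.Prime := ⟨hp⟩
  have hfrob : ∀ a b : K, (a + b) ^ q = a ^ q + b ^ q := by
    intro a b; rw [hq]; exact add_pow_char_pow a b p n
  have hneg1 : (-1 : K) ^ q = -1 := by rw [hq]; exact neg_one_pow_char_pow K p n
  have hq1 : 1 < q := by rw [hq]; exact Nat.one_lt_pow hn.ne' hp.one_lt
  obtain ⟨r, rfl⟩ : ∃ r, q = r + 1 := ⟨q - 1, by omega⟩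
  have hm : (r + 1) ^ 2 - (r + 1) + 1 = r ^ 2 + r + 1 := by
    have : (r + 1) ^ 2 = r ^ 2 + 2 * r + 1 := by ring
    omega
  have hr1 : r + 1 - 1 = r := rfl
  rw [hm] at h2 ⊢
  rw [hr1] at h2 ⊢
  have hnegpow : (-y / x) ^ (r + 1 + 1) = (y / x) ^ (r + 1 + 1) := by
    rw [neg_div, neg_pow, pow_succ, hneg1]; ring
  -- first equation
  have e1 : (1 / x) ^ (r + 1) + 1 / x = (-y / x) ^ (r + 1 + 1) := by
    rw [hnegpow, div_pow y x, ← h1]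
    field_simp
    have hxr : x ^ r * x⁻¹ ^ r = 1 := by rw [← mul_pow, mul_inv_cancel₀ hx, one_pow]
    have hx1 : x * x⁻¹ = 1 := mul_inv_cancel₀ hx
    linear_combination (x ^ 3 * x⁻¹) * hxr + x ^ 2 * hx1
  refine ⟨e1, ?_⟩
  -- key identity : (x^q + x)^r * (x^r + 1) = x^{r^2+2r} + x^r
  have key : (x ^ (r + 1) + x) ^ r * (x ^ r + 1) = x ^ (r ^ 2 + 2 * r) + x ^ r := by
    have hA : x ^ (r + 1) + x = x * (x ^ r + 1) := by ring
    have hfr : (x ^ r + 1) ^ (r + 1) = x ^ (r * (r + 1)) + 1 := by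
      have := hfrob (x ^ r) 1
      rwa [one_pow, ← pow_mul] at this
    calc (x ^ (r + 1) + x) ^ r * (x ^ r + 1)
        = (x * (x ^ r + 1)) ^ r * (x ^ r + 1) := by rw [hA]
      _ = x ^ r * (x ^ r + 1) ^ (r + 1) := by rw [mul_pow, pow_succ]; ring
      _ = x ^ r * (x ^ (r * (r + 1)) + 1) := by rw [hfr]
      _ = x ^ (r ^ 2 + 2 * r) + x ^ r := by rw [mul_add, ← pow_add]; ring_nf
  -- second equation
  rw [e1, hnegpow]
  have hyx : (y / x) ^ (r + 1 + 1) = (x ^ (r + 1) + x) / x ^ (r + 1 + 1) := by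
    rw [div_pow, ← h1]
  rw [hyx, div_pow z x, ← h2, div_pow, ← pow_mul]
  field_simp
  ring_nf
  linear_combination (-(y) * x ^ (r ^ 2 + r + 1)) * key
end

section
/- Let K be a field of characteristic p > 0 and let q be a power of p. Suppose x, y, z ∈ K satisfy x^q + x = y^{q+1} and y((x^q + x)^{q−1} − 1) = z^{q²−q+1}. Then z = 0 if and only if x^{q²} = x and y^{q²} = y. (In particular, the affine points of the Giulietti–Korchmáros curve lying on the plane z = 0 are exactly its affine points rational over the field with q² elements.) -/
/-- On the affine Giulietti–Korchmáros curve, `z = 0` iff `(x, y)` is rational over the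
field with `q²` elements, i.e. `x^{q²} = x` and `y^{q²} = y`. -/
theorem stmt_10 {K : Type*} [Field K] (p n q : ℕ) (hp : p.Prime) [CharP K p]
    (hn : 0 < n) (hq : q = p ^ n) (x y z : K)
    (h1 : x ^ q + x = y ^ (q + 1))
    (h2 : y * ((x ^ q + x) ^ (q - 1) - 1) = z ^ (q ^ 2 - q + 1)) :
    z = 0 ↔ x ^ (q ^ 2) = x ∧ y ^ (q ^ 2) = y := by
  haveI : Fact p.Prime := ⟨hp⟩
  have hfact := hp.one_lt
  have hq2 : 2 ≤ q := by
    rw [hq]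
    calc 2 ≤ p := hfact
    _ = p ^ 1 := (pow_one p).symm
    _ ≤ p ^ n := Nat.pow_le_pow_right (le_of_lt hfact) hn
  have hqsq : q ^ 2 = q * q := sq q
  have hq2one : 1 ≤ q ^ 2 := Nat.one_le_pow _ _ (by omega)
  have hm1 : q ^ 2 - 1 = (q + 1) * (q - 1) := by
    obtain ⟨k, rfl⟩ := Nat.exists_eq_add_of_le (by omega : 1 ≤ q)
    have h : (1 + k) ^ 2 = (1 + k + 1) * k + 1 := by ring
    have h2 : 1 + k - 1 = k := by omega
    rw [h2]; omega
  have hmne : q ^ 2 - q + 1 ≠ 0 := by omega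
  have hfrob : (x ^ q + x) ^ q = x ^ (q ^ 2) + x ^ q := by
    rw [hqsq, mul_comm, pow_mul]
    subst hq
    exact add_pow_char_pow ..
  constructor
  · rintro rfl
    rw [zero_pow hmne] at h2
    rcases eq_or_ne y 0 with hy | hy
    · subst hy
      have hs : x ^ q + x = 0 := by
        rw [h1, zero_pow (by omega : q + 1 ≠ 0)]
      have hxq : x ^ q = -x := by linear_combination hs
      have hx2 : x ^ (q ^ 2) = (-x) ^ q := by rw [hqsq, mul_comm, pow_mul, hxq]
      have hneg : (-x : K) ^ q = -(x ^ q) := by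
        have h' := sub_pow_char_pow (R := K) (p := p) (n := n) (x := 0) (y := x)
        rw [← hq, zero_pow (by omega : q ≠ 0), zero_sub, zero_sub] at h'
        exact h'
      refine ⟨by rw [hx2, hneg, hxq, neg_neg], by rw [zero_pow (by omega : q ^ 2 ≠ 0)]⟩
    · have hs1 : (x ^ q + x) ^ (q - 1) = 1 := by
        rcases mul_eq_zero.mp h2 with h | h
        · exact absurd h hy
        · exact sub_eq_zero.mp h
      have hsq : (x ^ q + x) ^ q = x ^ q + x := by
        have h' : (x ^ q + x) ^ (q - 1 + 1) = x ^ q + x := by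
          rw [pow_succ, hs1, one_mul]
        rwa [show q - 1 + 1 = q from by omega] at h'
      have hx : x ^ (q ^ 2) = x := by
        rw [hfrob] at hsq
        linear_combination hsq
      refine ⟨hx, ?_⟩
      have hy1 : y ^ (q ^ 2 - 1) = 1 := by
        rw [hm1, pow_mul, ← h1, hs1]
      have h' : y ^ (q ^ 2 - 1 + 1) = y := by rw [pow_succ, hy1, one_mul]
      rwa [show q ^ 2 - 1 + 1 = q ^ 2 from by omega] at h'
  · rintro ⟨hx, hy⟩
    rcases eq_or_ne y 0 with hy0 | hy0
    · subst hy0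
      rw [zero_mul] at h2
      exact pow_eq_zero_iff hmne |>.mp h2.symm
    · have hy1 : y ^ (q ^ 2 - 1) = 1 := by
        have h' : y ^ (q ^ 2 - 1) * y = 1 * y := by
          rw [one_mul, ← pow_succ, show q ^ 2 - 1 + 1 = q ^ 2 from by omega, hy]
        exact mul_right_cancel₀ hy0 h'
      have hs1 : (x ^ q + x) ^ (q - 1) = 1 := by
        rw [h1, ← pow_mul, ← hm1, hy1]
      rw [hs1, sub_self, mul_zero] at h2
      exact pow_eq_zero_iff hmne |>.mp h2.symm
end

section
/- Let K be a field of characteristic p > 0, let q be a power of p, and let a, b ∈ K satisfy a^{q²} = a, b^{q²} = b, and a^q + a = b^{q+1}. If x, y, z ∈ K satisfy x^q + x = y^{q+1} and y((x^q + x)^{q−1} − 1) = z^{q²−q+1}, then the triple (x + b^q y + a, y + b, z) also satisfies these two equations. (That is, the translation automorphisms of the group G₁ of order q³ preserve the affine Giulietti–Korchmáros curve.) -/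
/-- The translations `(x, y, z) ↦ (x + b^q y + a, y + b, z)` with `a, b` in the field of
`q²` elements and `a^q + a = b^{q+1}` preserve the affine Giulietti–Korchmáros curve. -/
theorem stmt_11 {K : Type*} [Field K] (p n q : ℕ) (hp : p.Prime) [CharP K p]
    (hn : 0 < n) (hq : q = p ^ n) (a b : K)
    (ha : a ^ (q ^ 2) = a) (hb : b ^ (q ^ 2) = b) (hab : a ^ q + a = b ^ (q + 1))
    (x y z : K)
    (h1 : x ^ q + x = y ^ (q + 1))
    (h2 : y * ((x ^ q + x) ^ (q - 1) - 1) = z ^ (q ^ 2 - q + 1)) :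
    (x + b ^ q * y + a) ^ q + (x + b ^ q * y + a) = (y + b) ^ (q + 1) ∧
      (y + b) * (((x + b ^ q * y + a) ^ q + (x + b ^ q * y + a)) ^ (q - 1) - 1) =
        z ^ (q ^ 2 - q + 1) := by
  haveI : Fact p.Prime := ⟨hp⟩
  have frob : ∀ u v : K, (u + v) ^ q = u ^ q + v ^ q := by
    intro u v
    subst hq
    exact add_pow_char_pow u v p n
  have hq1 : 1 ≤ q := by
    subst hq; exact Nat.one_le_pow _ _ hp.pos
  obtain ⟨m, hm⟩ := Nat.exists_eq_add_of_le hq1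
  have hsub : (q + 1) * (q - 1) = q ^ 2 - 1 := by
    subst hm
    have e1 : (1 + m + 1) * (1 + m - 1) = m * m + 2 * m := by
      simp; ring
    have e2 : (1 + m) ^ 2 = m * m + 2 * m + 1 := by ring
    omega
  have hq2 : q ^ 2 - 1 + 1 = q ^ 2 := by
    have : 1 ≤ q ^ 2 := Nat.one_le_pow _ _ (by omega)
    omega
  have gen : ∀ u : K, u * ((u ^ (q + 1)) ^ (q - 1) - 1) = u ^ (q ^ 2) - u := by
    intro u
    rw [← pow_mul, hsub, mul_sub, mul_one, mul_comm, ← pow_succ, hq2]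
  have hbq : (b ^ q) ^ q = b := by
    rw [← pow_mul, ← pow_two, hb]
  have key1 : (x + b ^ q * y + a) ^ q + (x + b ^ q * y + a) = (y + b) ^ (q + 1) := by
    have expand : (x + b ^ q * y + a) ^ q = x ^ q + b * y ^ q + a ^ q := by
      rw [frob, frob, mul_pow, hbq]
    rw [expand, pow_succ, frob]
    rw [pow_succ] at h1 hab
    linear_combination h1 + hab
  refine ⟨key1, ?_⟩
  rw [key1, gen]
  rw [h1, gen] at h2
  have hyb : (y + b) ^ (q ^ 2) = y ^ (q ^ 2) + b := by
    rw [pow_two, pow_mul, frob, frob, ← pow_mul, ← pow_mul, ← pow_two, hb]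
  rw [hyb]
  linear_combination h2
end

section
/- Let K be a field of characteristic 2, let q₀ = 2^n with n ≥ 1, and let q = 2q₀². Suppose x, y, z ∈ K satisfy y^q + y = x^{q₀}(x^q + x) and x^q + x = z^{q−2q₀+1}. Set α = y^{2q₀} + x^{2q₀+1} and β = x·y^{2q₀} + α^{2q₀}, and suppose β ≠ 0. Then the triple (x', y', z') = (α/β, y/β, z/β) also satisfies y'^q + y' = x'^{q₀}(x'^q + x') and x'^q + x' = z'^{q−2q₀+1}. (That is, the map ξ preserves the affine part of Skabelund's cyclic cover of the Suzuki curve.) -/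
/-- The map `ξ(x, y, z) = (α/β, y/β, z/β)` with `α = y^{2q₀} + x^{2q₀+1}` and
`β = x y^{2q₀} + α^{2q₀}` preserves the affine part of Skabelund's cyclic cover of the
Suzuki curve: `y^q + y = x^{q₀}(x^q + x)`, `x^q + x = z^{q-2q₀+1}`. -/
theorem stmt_12 {K : Type*} [Field K] [CharP K 2] (n q₀ q : ℕ)
    (hn : 1 ≤ n) (hq₀ : q₀ = 2 ^ n) (hq : q = 2 * q₀ ^ 2) (x y z : K)
    (h1 : y ^ q + y = x ^ q₀ * (x ^ q + x))
    (h2 : x ^ q + x = z ^ (q - 2 * q₀ + 1))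
    (α β : K)
    (hα : α = y ^ (2 * q₀) + x ^ (2 * q₀ + 1))
    (hβ : β = x * y ^ (2 * q₀) + α ^ (2 * q₀))
    (hβ0 : β ≠ 0) :
    (y / β) ^ q + y / β = (α / β) ^ q₀ * ((α / β) ^ q + α / β) ∧
      (α / β) ^ q + α / β = (z / β) ^ (q - 2 * q₀ + 1) := by
  haveI : Fact (Nat.Prime 2) := ⟨by norm_num⟩
  have htwo : (2 : K) = 0 := by exact_mod_cast CharP.cast_eq_zero K 2
  have hsq : ∀ a b : K, (a + b) ^ 2 = a ^ 2 + b ^ 2 := fun a b => by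
    linear_combination a * b * htwo
  have hF : ∀ a b : K, (a + b) ^ q₀ = a ^ q₀ + b ^ q₀ := fun a b => by
    rw [hq₀]; exact add_pow_char_pow a b 2 n
  subst hq
  set S := x ^ (2 * q₀ ^ 2) + x with hS
  -- basic rewrites of the curve equations
  have hyq : y ^ (2 * q₀ ^ 2) = y + x ^ q₀ * S := by linear_combination h1 - y * htwo
  -- e1 : α^{q₀} = y + x^{q₀+1}
  have e1 : α ^ q₀ = y + x ^ (q₀ + 1) := by
    rw [hα]
    linear_combination hF (y ^ (2 * q₀)) (x ^ (2 * q₀ + 1)) + hyq + x ^ q₀ * hS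
      + x ^ (2 * q₀ ^ 2 + q₀) * htwo
  -- e1sq : α^{2q₀} = y² + x^{2q₀+2}
  have e1sq : α ^ (2 * q₀) = y ^ 2 + x ^ (2 * q₀ + 2) := by
    linear_combination (α ^ q₀ + y + x ^ (q₀ + 1)) * e1 + y * x ^ (q₀ + 1) * htwo
  -- e2 : β = y² + xα
  have e2 : β = y ^ 2 + x * α := by
    rw [hβ]
    linear_combination e1sq - x * hα
  -- e3 : β^{q₀} = α + x^{q₀} y
  have e3 : β ^ q₀ = α + x ^ q₀ * y := by
    rw [e2]
    linear_combination hF (y ^ 2) (x * α) + x ^ q₀ * e1 - hα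
  -- e3sq : β^{2q₀} = α² + x^{2q₀} y²
  have e3sq : β ^ (2 * q₀) = α ^ 2 + x ^ (2 * q₀) * y ^ 2 := by
    linear_combination (β ^ q₀ + α + x ^ q₀ * y) * e3 + α * x ^ q₀ * y * htwo
  -- e4 : α^q = α + x^{2q₀} S
  have e4 : α ^ (2 * q₀ ^ 2) = α + x ^ (2 * q₀) * S := by
    have t1 : α ^ (2 * q₀ ^ 2) = ((y + x ^ (q₀ + 1)) ^ q₀) ^ 2 := by
      rw [← e1]; ring
    rw [t1, hF y (x ^ (q₀ + 1)), hsq]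
    linear_combination -hα - x ^ (2 * q₀) * hS - x ^ (2 * q₀ + 1) * htwo
  -- e5 : β^q = β + S y^{2q₀}
  have e5 : β ^ (2 * q₀ ^ 2) = β + S * y ^ (2 * q₀) := by
    have t3 : β ^ (2 * q₀ ^ 2) = ((α + x ^ q₀ * y) ^ q₀) ^ 2 := by
      rw [← e3]; ring
    rw [t3, hF α (x ^ q₀ * y), hsq]
    linear_combination (α ^ q₀ + y + x ^ (q₀ + 1)) * e1 - e2 - x * hα
      - y ^ (2 * q₀) * hS + (y * x ^ (q₀ + 1) - x * y ^ (2 * q₀)) * htwo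
  -- hA
  have hA : α ^ (2 * q₀ ^ 2) * β + α * β ^ (2 * q₀ ^ 2) = S * β ^ (2 * q₀) := by
    linear_combination β * e4 + α * e5 - S * e3sq + S * x ^ (2 * q₀) * e2
      - S * α * hα + α * β * htwo
  -- hB
  have hB : y ^ (2 * q₀ ^ 2) * β + y * β ^ (2 * q₀ ^ 2) = S * (α ^ q₀ * β ^ q₀) := by
    linear_combination β * hyq + y * e5 - S * β ^ q₀ * e1 - S * (y + x ^ (q₀ + 1)) * e3
      + S * x ^ q₀ * e2 - S * y * hα + (y * β - S * x ^ (2 * q₀ + 1) * y) * htwo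
  -- arithmetic of exponents for the second goal
  have hq₀2 : 2 ≤ q₀ := by
    rw [hq₀]
    calc 2 = 2 ^ 1 := by norm_num
    _ ≤ 2 ^ n := Nat.pow_le_pow_right (by norm_num) hn
  have hmle : 2 * q₀ ≤ 2 * q₀ ^ 2 := by nlinarith
  have hmsum : 2 * q₀ ^ 2 - 2 * q₀ + 1 + 2 * q₀ = 2 * q₀ ^ 2 + 1 := by omega
  have hpow : β ^ (2 * q₀ ^ 2 - 2 * q₀ + 1) * β ^ (2 * q₀) = β ^ (2 * q₀ ^ 2) * β := by
    rw [← pow_add, hmsum, pow_succ]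
  have hz : z ^ (2 * q₀ ^ 2 - 2 * q₀ + 1) = S := h2.symm
  have hβq : β ^ (2 * q₀ ^ 2) ≠ 0 := pow_ne_zero _ hβ0
  constructor
  · rw [div_pow, div_pow, div_pow, div_add_div _ _ hβq hβ0, div_add_div _ _ hβq hβ0,
      div_mul_div_comm, div_eq_div_iff (mul_ne_zero hβq hβ0)
        (mul_ne_zero (pow_ne_zero _ hβ0) (mul_ne_zero hβq hβ0))]
    linear_combination β ^ q₀ * (β ^ (2 * q₀ ^ 2) * β) * hB
      - α ^ q₀ * (β ^ (2 * q₀ ^ 2) * β) * hA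
  · rw [div_pow, div_pow, div_add_div _ _ hβq hβ0,
      div_eq_div_iff (mul_ne_zero hβq hβ0) (pow_ne_zero _ hβ0)]
    linear_combination β ^ (2 * q₀ ^ 2 - 2 * q₀ + 1) * hA + S * hpow
      - β ^ (2 * q₀ ^ 2) * β * hz
end

section
/- Let K be a field of characteristic 2, let q₀ = 2^n with n ≥ 1, and let q = 2q₀². Let a, b ∈ K satisfy a^q = a and b^q = b. If x, y, z ∈ K satisfy y^q + y = x^{q₀}(x^q + x) and x^q + x = z^{q−2q₀+1}, then the triple (x + a, y + a^{q₀}x + b, z) also satisfies these two equations. (That is, the group G₁ of order q² preserves the affine part of Skabelund's cyclic cover of the Suzuki curve.) -/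
/-- The maps `(x, y, z) ↦ (x + a, y + a^{q₀} x + b, z)` with `a, b` in the field of `q`
elements preserve the affine part of Skabelund's cyclic cover of the Suzuki curve:
`y^q + y = x^{q₀}(x^q + x)`, `x^q + x = z^{q-2q₀+1}`. -/
theorem stmt_13 {K : Type*} [Field K] [CharP K 2] (n q₀ q : ℕ)
    (hn : 1 ≤ n) (hq₀ : q₀ = 2 ^ n) (hq : q = 2 * q₀ ^ 2)
    (a b : K) (ha : a ^ q = a) (hb : b ^ q = b) (x y z : K)
    (h1 : y ^ q + y = x ^ q₀ * (x ^ q + x))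
    (h2 : x ^ q + x = z ^ (q - 2 * q₀ + 1)) :
    (y + a ^ q₀ * x + b) ^ q + (y + a ^ q₀ * x + b) =
        (x + a) ^ q₀ * ((x + a) ^ q + (x + a)) ∧
      (x + a) ^ q + (x + a) = z ^ (q - 2 * q₀ + 1) := by
  have hq' : q = 2 ^ (2 * n + 1) := by
    subst hq₀; subst hq; ring
  have two_eq : (2 : K) = 0 := by
    exact_mod_cast CharP.cast_eq_zero K 2
  have frobq : ∀ u v : K, (u + v) ^ q = u ^ q + v ^ q := fun u v => by
    rw [hq']; exact add_pow_char_pow u v 2 (2 * n + 1)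
  have frobq₀ : ∀ u v : K, (u + v) ^ q₀ = u ^ q₀ + v ^ q₀ := fun u v => by
    rw [hq₀]; exact add_pow_char_pow u v 2 n
  have haq : (a ^ q₀) ^ q = a ^ q₀ := by
    rw [← pow_mul, mul_comm, pow_mul, ha]
  constructor
  · rw [frobq, frobq, frobq, frobq₀, mul_pow, haq, hb, ha]
    linear_combination h1 + (b - a * (x ^ q₀ + a ^ q₀)) * two_eq
  · rw [frobq, ha]
    linear_combination h2 + a * two_eq
end
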